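/- arXiv:1706.07747 — 2 statements merged into one kernel-verified Lean document; each statement's English description precedes it below -/
import Mathlib

section
/- For every x with 0 ≤ x ≤ C and every demand d ≥ 1, the number of exact link states with occupancy x that contain a run of at least d consecutive free tokens (the non-blocking states NB(x,d)) equals Σ_{n} (N(n)! / ∏_t n_t!) · W(n), where the sum ranges over all patterns n = (n_1,…,n_T) ∈ ℕ^T with Σ_t n_t·d_t = x, N(n) := Σ_t n_t, E := C − x, and W(n) := Σ_{i=1}^{N(n)+1} (−1)^{i+1} · C(N(n)+1, i) · C(E + N(n) − i·d, N(n)), with E + N(n) − i·d interpreted as an integer and binomial coefficients with upper argument less than the lower argument taken as 0. (This is Theorem 2 of the paper: the count of non-blocking exact link states for a class with demand d in occupancy state x under the random-fit policy.) -/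
/-- Tokens of an exact link state: `none` is a free slice (weight 1),
`some t` is a connection of type `t` (weight `dem t`). -/
abbrev Token (T : ℕ) := Option (Fin T)

/-- Weight of a token: a free slice has weight 1, a type-`t` token has weight `dem t`. -/
def tokenWeight {T : ℕ} (dem : Fin T → ℕ) (o : Token T) : ℕ := o.elim 1 dem

/-- Occupancy weight of a token: a free slice contributes 0, a type-`t` token `dem t`. -/
def tokenOcc {T : ℕ} (dem : Fin T → ℕ) (o : Token T) : ℕ := o.elim 0 dem

/-- Binomial coefficient with an integer upper argument: `0` whenever the upper
argument is negative (and, via `Nat.choose`, whenever it is less than the lower one). -/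
def intChoose (p : ℤ) (q : ℕ) : ℤ := if p < 0 then 0 else (p.toNat.choose q : ℤ)

open List Finset

/-! ### Generic infix lemmas -/

lemma prefix_of_prefix_append_cons {α : Type*} {x : α} {l w v : List α}
    (hx : x ∉ l) (h : l <+: w ++ x :: v) : l <+: w := by
  induction l generalizing w with
  | nil => exact nil_prefix
  | cons b l ih =>
    cases w with
    | nil =>
      obtain ⟨hb, -⟩ := cons_prefix_cons.1 h
      exact absurd (hb ▸ List.mem_cons_self (a := b) (l := l)) hx
    | cons c w =>
      obtain ⟨hb, ht⟩ := cons_prefix_cons.1 h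
      exact hb ▸ cons_prefix_cons.2 ⟨rfl, ih (fun hm => hx (mem_cons_of_mem _ hm)) ht⟩

lemma infix_append_cons_split {α : Type*} {x : α} {l u v : List α}
    (hx : x ∉ l) (h : l <:+: u ++ x :: v) : l <:+: u ∨ l <:+: v := by
  induction u with
  | nil =>
    rcases infix_cons_iff.1 h with h | h
    · left
      cases l with
      | nil => exact nil_infix
      | cons b l =>
        obtain ⟨hb, -⟩ := cons_prefix_cons.1 h
        exact absurd (hb ▸ List.mem_cons_self (a := b) (l := l)) hx
    · exact Or.inr h
  | cons c u ih =>
    rcases infix_cons_iff.1 h with h | h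
    · exact Or.inl ((prefix_of_prefix_append_cons hx (by simpa using h)).isInfix)
    · rcases ih h with h | h
      · exact Or.inl (infix_cons h)
      · exact Or.inr h

lemma replicate_infix_replicate_iff {α : Type*} {a : α} {d g : ℕ} :
    replicate d a <:+: replicate g a ↔ d ≤ g := by
  constructor
  · intro h
    simpa using h.sublist.length_le
  · intro h
    refine ⟨[], replicate (g - d) a, ?_⟩
    simp [← replicate_add, Nat.add_sub_cancel' h]

/-! ### The gap/token encoding of states -/

variable {T : ℕ}

def build : ℕ → List (Fin T × ℕ) → List (Token T)
  | g, [] => List.replicate g none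
  | g, (t, g') :: p => List.replicate g none ++ some t :: build g' p

lemma build_succ (g : ℕ) (p : List (Fin T × ℕ)) :
    build (g + 1) p = none :: build g p := by
  cases p with
  | nil => simp [build, replicate_succ]
  | cons q p => obtain ⟨t, g'⟩ := q; simp [build, replicate_succ]

lemma build_zero_cons (t : Fin T) (g' : ℕ) (p : List (Fin T × ℕ)) :
    build 0 ((t, g') :: p) = some t :: build g' p := by
  simp [build]

lemma build_nil_eq (g : ℕ) : build (T := T) g [] = List.replicate g none := rfl

lemma build_inj : ∀ (p : List (Fin T × ℕ)) {g g' : ℕ} {p' : List (Fin T × ℕ)},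
    build g p = build g' p' → g = g' ∧ p = p' := by
  intro p
  induction p with
  | nil =>
    intro g g' p' h
    induction g generalizing g' with
    | zero =>
      cases g' with
      | zero =>
        cases p' with
        | nil => exact ⟨rfl, rfl⟩
        | cons q' p' =>
          obtain ⟨t', h'⟩ := q'
          rw [build_nil_eq, build_zero_cons] at h
          simp at h
      | succ g' =>
        rw [build_nil_eq, build_succ] at h
        simp [replicate] at h
    | succ g ihg =>
      cases g' with
      | zero =>
        cases p' with
        | nil =>
          rw [build_nil_eq, build_nil_eq] at h
          simpa using congrArg List.length h
        | cons q' p' =>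
          obtain ⟨t', h'⟩ := q'
          rw [build_succ, build_zero_cons] at h
          simp at h
      | succ g' =>
        rw [build_succ, build_succ] at h
        obtain ⟨h1, h2⟩ := ihg (List.cons.inj h).2
        exact ⟨by omega, h2⟩
  | cons q p ihp =>
    obtain ⟨t, gq⟩ := q
    intro g g' p' h
    induction g generalizing g' with
    | zero =>
      cases g' with
      | zero =>
        cases p' with
        | nil =>
          rw [build_nil_eq, build_zero_cons] at h
          simp at h
        | cons q' p' =>
          obtain ⟨t', gq'⟩ := q'
          rw [build_zero_cons, build_zero_cons] at h
          simp only [List.cons.injEq, Option.some.injEq] at h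
          obtain ⟨h1, h2⟩ := ihp h.2
          simp [h.1, h1, h2]
      | succ g' =>
        rw [build_zero_cons, build_succ] at h
        simp at h
    | succ g ihg =>
      cases g' with
      | zero =>
        cases p' with
        | nil =>
          rw [build_succ, build_nil_eq] at h
          simp [replicate] at h
        | cons q' p' =>
          obtain ⟨t', gq'⟩ := q'
          rw [build_succ, build_zero_cons] at h
          simp at h
      | succ g' =>
        rw [build_succ, build_succ] at h
        obtain ⟨h1, h2⟩ := ihg (List.cons.inj h).2
        exact ⟨by omega, h2⟩

lemma build_surj (s : List (Token T)) : ∃ g p, s = build g p := by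
  induction s with
  | nil => exact ⟨0, [], rfl⟩
  | cons o s ih =>
    obtain ⟨g, p, rfl⟩ := ih
    cases o with
    | none => exact ⟨g + 1, p, (build_succ g p).symm⟩
    | some t => exact ⟨0, (t, g) :: p, (build_zero_cons t g p).symm⟩

lemma count_build_some (g : ℕ) (p : List (Fin T × ℕ)) (t : Fin T) :
    (build g p).count (some t) = (p.map Prod.fst).count t := by
  induction p generalizing g with
  | nil => simp [build_nil_eq, List.count_replicate]
  | cons q p ih =>
    obtain ⟨a, h⟩ := q
    simp [build, List.count_append, List.count_replicate, List.count_cons, ih]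

lemma count_build_none (g : ℕ) (p : List (Fin T × ℕ)) :
    (build g p).count none = g + (p.map Prod.snd).sum := by
  induction p generalizing g with
  | nil => simp [build_nil_eq, List.count_replicate]
  | cons q p ih =>
    obtain ⟨a, h⟩ := q
    simp [build, List.count_append, List.count_replicate, List.count_cons, ih]
    try omega

/-! ### Weight / occupancy / length lemmas -/

variable {dem : Fin T → ℕ}

lemma occ_eq_sum_counts (s : List (Token T)) :
    (s.map (tokenOcc dem)).sum = ∑ t, s.count (some t) * dem t := by
  induction s with
  | nil => simp
  | cons o s ih =>
    cases o with
    | none => simp [tokenOcc, ih, List.count_cons]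
    | some a =>
      have key : ∀ t : Fin T, (some a :: s : List (Token T)).count (some t) * dem t
          = s.count (some t) * dem t + if t = a then dem a else 0 := by
        intro t
        by_cases h : a = t
        · subst h; simp [List.count_cons, Nat.add_mul]
        · simp [List.count_cons, h, Ne.symm h]
      simp only [List.map_cons, List.sum_cons, ih, tokenOcc, Option.elim]
      rw [Finset.sum_congr rfl fun t _ => key t, Finset.sum_add_distrib,
        Finset.sum_ite_eq' Finset.univ a fun _ => dem a]
      simp [Nat.add_comm]

lemma weight_eq_count_none_add_occ (s : List (Token T)) :
    (s.map (tokenWeight dem)).sum = s.count none + (s.map (tokenOcc dem)).sum := by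
  induction s with
  | nil => simp
  | cons o s ih =>
    cases o with
    | none => simp [tokenWeight, tokenOcc, ih, List.count_cons]; omega
    | some a => simp [tokenWeight, tokenOcc, ih, List.count_cons]; omega

lemma length_le_weight (hdem : ∀ t, 1 ≤ dem t) (s : List (Token T)) :
    s.length ≤ (s.map (tokenWeight dem)).sum := by
  induction s with
  | nil => simp
  | cons o s ih =>
    have : 1 ≤ tokenWeight dem o := by cases o <;> simp [tokenWeight, hdem _]
    simp only [List.map_cons, List.sum_cons, List.length_cons]
    omega

lemma length_eq_sum_counts (l : List (Fin T)) :
    l.length = ∑ t, l.count t := by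
  induction l with
  | nil => simp
  | cons a l ih =>
    simp only [List.length_cons, ih, List.count_cons]
    rw [Finset.sum_add_distrib]
    simp

lemma length_eq_counts_tokens (s : List (Token T)) :
    s.length = s.count none + ∑ t, s.count (some t) := by
  induction s with
  | nil => simp
  | cons o s ih =>
    cases o with
    | none => simp [ih, List.count_cons]; omega
    | some a =>
      simp only [List.length_cons, ih, List.count_cons, Option.some.injEq,
        reduceCtorEq, if_false]
      rw [Finset.sum_add_distrib]
      simp
      try omega

/-! ### Run characterization -/

lemma run_build (d : ℕ) (g : ℕ) (p : List (Fin T × ℕ)) :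
    List.replicate d (none : Token T) <:+: build g p ↔ d ≤ g ∨ ∃ q ∈ p, d ≤ q.2 := by
  induction p generalizing g with
  | nil =>
    rw [build_nil_eq, replicate_infix_replicate_iff]
    simp
  | cons q p ih =>
    obtain ⟨a, h⟩ := q
    constructor
    · intro hr
      rw [show build g ((a, h) :: p) = List.replicate g none ++ some a :: build h p
        from rfl] at hr
      rcases infix_append_cons_split (x := some a)
          (by simp [List.mem_replicate]) hr with hr | hr
      · exact Or.inl (replicate_infix_replicate_iff.1 hr)
      · rcases (ih h).1 hr with hh | ⟨q, hq, hdq⟩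
        · exact Or.inr ⟨(a, h), List.mem_cons_self, hh⟩
        · exact Or.inr ⟨q, List.mem_cons_of_mem _ hq, hdq⟩
    · intro hr
      have hsuf : build h p <:+: build g ((a, h) :: p) := by
        show build h p <:+: List.replicate g none ++ some a :: build h p
        exact ((List.suffix_cons (some a) (build h p)).trans
          (List.suffix_append _ _)).isInfix
      rcases hr with hg | ⟨q, hq, hdq⟩
      · exact ((replicate_infix_replicate_iff.2 hg).trans
          (List.prefix_append _ _).isInfix)
      · rcases List.mem_cons.1 hq with rfl | hq
        · exact ((ih h).2 (Or.inl (by simpa using hdq))).trans hsuf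
        · exact ((ih h).2 (Or.inr ⟨q, hq, hdq⟩)).trans hsuf

/-! ### ncard of a disjoint biUnion -/

lemma ncard_biUnion_finset {ι α : Type*} (I : Finset ι) (S : ι → Set α)
    (hfin : ∀ i ∈ I, (S i).Finite)
    (hdisj : ∀ i ∈ I, ∀ j ∈ I, i ≠ j → Disjoint (S i) (S j)) :
    (⋃ i ∈ I, S i).ncard = ∑ i ∈ I, (S i).ncard := by
  classical
  induction I using Finset.induction_on with
  | empty => simp
  | @insert a I ha ih =>
    have hd : Disjoint (S a) (⋃ i ∈ I, S i) := by
      rw [Set.disjoint_iUnion₂_right]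
      intro i hi
      exact hdisj a (Finset.mem_insert_self a I) i (Finset.mem_insert_of_mem hi)
        (fun h => ha (h ▸ hi))
    have hf1 : (S a).Finite := hfin a (Finset.mem_insert_self a I)
    have hf2 : (⋃ i ∈ (I : Finset ι), S i).Finite := Set.Finite.biUnion I.finite_toSet
        (fun i hi => hfin i (Finset.mem_insert_of_mem hi))
    rw [Finset.set_biUnion_insert, Set.ncard_union_eq hd hf1 hf2, Finset.sum_insert ha,
      ih (fun i hi => hfin i (Finset.mem_insert_of_mem hi))
        (fun i hi j hj hij => hdisj i (Finset.mem_insert_of_mem hi) j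
          (Finset.mem_insert_of_mem hj) hij)]

/-! ### Multinomial recurrence and counting lists by content -/

open Nat in
lemma multinomial_succ {T : ℕ} (n : Fin T → ℕ) (h : 0 < ∑ t, n t) :
    ∑ t ∈ Finset.univ.filter fun t => n t ≠ 0,
      Nat.multinomial Finset.univ (Function.update n t (n t - 1))
      = Nat.multinomial Finset.univ n := by
  classical
  have hP : 0 < ∏ t, (n t)! := Finset.prod_pos fun t _ => Nat.factorial_pos _
  apply Nat.eq_of_mul_eq_mul_left hP
  rw [Finset.mul_sum]
  have key : ∀ t ∈ Finset.univ.filter fun t => n t ≠ 0,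
      (∏ s, (n s)!) * Nat.multinomial Finset.univ (Function.update n t (n t - 1))
      = n t * (∑ s, n s - 1)! := by
    intro t ht
    have hnt : n t ≠ 0 := (Finset.mem_filter.1 ht).2
    have hprod : ∏ s, (Function.update n t (n t - 1) s)!
        = (n t - 1)! * ∏ s ∈ Finset.univ.erase t, (n s)! := by
      rw [← Finset.mul_prod_erase Finset.univ _ (Finset.mem_univ t),
        Function.update_self]
      congr 1
      exact Finset.prod_congr rfl fun s hs =>
        by rw [Function.update_of_ne (Finset.ne_of_mem_erase hs)]
    have hsum : ∑ s, Function.update n t (n t - 1) s = ∑ s, n s - 1 := by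
      rw [Finset.sum_update_of_mem (Finset.mem_univ t)]
      have h2 : ∑ s, n s = n t + ∑ s ∈ Finset.univ.erase t, n s :=
        (Finset.add_sum_erase _ _ (Finset.mem_univ t)).symm
      rw [Finset.sdiff_singleton_eq_erase]
      omega
    have hfac : ∏ s, (n s)! = n t * ((n t - 1)! * ∏ s ∈ Finset.univ.erase t, (n s)!) := by
      rw [← Finset.mul_prod_erase Finset.univ _ (Finset.mem_univ t), ← Nat.mul_assoc]
      congr 1
      rw [← Nat.succ_pred_eq_of_pos (Nat.pos_of_ne_zero hnt), Nat.factorial_succ]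
      congr 2 <;> omega
    rw [hfac, Nat.mul_assoc, ← hprod, Nat.multinomial_spec, hsum]
  rw [Finset.sum_congr rfl key, ← Finset.sum_mul, Nat.multinomial_spec,
    Finset.sum_filter_ne_zero]
  rw [← Nat.succ_pred_eq_of_pos h, Nat.factorial_succ]
  congr 2 <;> omega

lemma ncard_lists_eq_multinomial {T : ℕ} :
    ∀ (k : ℕ) (n : Fin T → ℕ), ∑ t, n t = k →
    {l : List (Fin T) | ∀ t, l.count t = n t}.ncard = Nat.multinomial Finset.univ n := by
  intro k
  induction k with
  | zero =>
    intro n hn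
    have hn0 : ∀ t, n t = 0 := fun t =>
      (Finset.sum_eq_zero_iff.1 hn) t (Finset.mem_univ t)
    have hset : {l : List (Fin T) | ∀ t, l.count t = n t} = {[]} := by
      ext l
      simp only [Set.mem_setOf_eq, Set.mem_singleton_iff]
      constructor
      · intro h
        refine List.length_eq_zero_iff.1 ?_
        rw [length_eq_sum_counts l, Finset.sum_congr rfl fun t _ => h t, hn]
      · rintro rfl t; simp [hn0 t]
    rw [hset, Set.ncard_singleton]
    have hs := Nat.multinomial_spec (Finset.univ : Finset (Fin T)) n
    simp only [hn0, Nat.factorial_zero, Finset.prod_const_one, Nat.one_mul,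
      Finset.sum_const_zero] at hs
    simp [hs]
  | succ k ih =>
    intro n hn
    classical
    have hfin : ∀ (m : Fin T → ℕ),
        {l : List (Fin T) | ∀ t, l.count t = m t}.Finite := by
      intro m
      apply (List.finite_length_le (Fin T) (∑ t, m t)).subset
      intro l hl
      simp only [Set.mem_setOf_eq] at hl ⊢
      rw [length_eq_sum_counts l, Finset.sum_congr rfl fun t _ => hl t]
    have hset : {l : List (Fin T) | ∀ t, l.count t = n t}
        = ⋃ a ∈ Finset.univ.filter fun t => n t ≠ 0,
          (fun l => a :: l) '' {l : List (Fin T) | ∀ t,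
            l.count t = Function.update n a (n a - 1) t} := by
      ext l
      simp only [Set.mem_iUnion, Finset.mem_filter, Finset.mem_univ, true_and,
        Set.mem_image, Set.mem_setOf_eq]
      constructor
      · intro h
        have hlen : l.length = k + 1 := by
          rw [length_eq_sum_counts l, Finset.sum_congr rfl fun t _ => h t, hn]
        cases l with
        | nil => simp at hlen
        | cons a l' =>
          have hca : l'.count a + 1 = n a := by
            have := h a; simpa [List.count_cons] using this
          refine ⟨a, ⟨by omega, l', fun t => ?_, rfl⟩⟩
          have := h t
          rw [List.count_cons] at this
          by_cases hta : t = a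
          · subst hta; rw [Function.update_self]; omega
          · have hat : ¬ a = t := fun hh => hta hh.symm
            rw [Function.update_of_ne hta]
            simpa [hat] using this
      · rintro ⟨a, ⟨ha, l', hl', rfl⟩⟩ t
        rw [List.count_cons]
        by_cases hta : t = a
        · subst hta
          rw [hl' t, Function.update_self]
          simp
          omega
        · have hat : ¬ a = t := fun hh => hta hh.symm
          rw [hl' t, Function.update_of_ne hta]
          simp [hat]
    rw [hset, ncard_biUnion_finset]
    · rw [Finset.sum_congr rfl fun a ha => ?_, multinomial_succ n (by omega)]
      rw [Set.ncard_image_of_injective _ fun x y hxy => (List.cons.inj hxy).2]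
      apply ih
      have hna : n a ≠ 0 := (Finset.mem_filter.1 ha).2
      rw [Finset.sum_update_of_mem (Finset.mem_univ a), Finset.sdiff_singleton_eq_erase]
      have h2 : ∑ s, n s = n a + ∑ s ∈ Finset.univ.erase a, n s :=
        (Finset.add_sum_erase _ _ (Finset.mem_univ a)).symm
      omega
    · exact fun a _ => ((hfin _).image _)
    · intro a _ b _ hab
      rw [Set.disjoint_left]
      rintro l ⟨la, -, rfl⟩ ⟨lb, -, hlb⟩
      exact hab ((List.cons.inj hlb).1).symm

/-! ### Counting gap vectors -/

lemma card_antidiagonalTuple_succ (N m : ℕ) :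
    (Finset.Nat.antidiagonalTuple (N + 1) m).card = (m + N).choose N := by
  classical
  have hkey : N + 1 + m - 1 = m + N := by omega
  have hle : m ≤ m + N := by omega
  have h0 : Nat.card {P : Fin (N+1) → ℕ // P ∈ Finset.Nat.antidiagonalTuple (N+1) m}
      = (Finset.Nat.antidiagonalTuple (N + 1) m).card := Nat.card_eq_finsetCard _
  have h1 : Nat.card {P : Fin (N+1) → ℕ // ∑ i, P i = m}
      = Nat.card {P : Fin (N+1) → ℕ // P ∈ Finset.Nat.antidiagonalTuple (N+1) m} :=
    Nat.card_congr (Equiv.subtypeEquivRight fun P =>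
      Finset.Nat.mem_antidiagonalTuple.symm)
  have h2 : Nat.card {P : Fin (N+1) → ℕ // ∑ i, P i = m}
      = Nat.card (Sym (Fin (N+1)) m) :=
    (Nat.card_congr (Sym.equivNatSumOfFintype (Fin (N+1)) m)).symm
  have h4 : Fintype.card (Sym (Fin (N+1)) m) = (m + N).choose m := by
    rw [Sym.card_sym_eq_choose, Fintype.card_fin, hkey]
  have h5 : Nat.card (Sym (Fin (N+1)) m) = Fintype.card (Sym (Fin (N+1)) m) :=
    Nat.card_eq_fintype_card
  rw [← h0, ← h1, h2, h5, h4]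
  have h3 := Nat.choose_symm hle
  rw [Nat.add_sub_cancel_left] at h3
  exact h3.symm

lemma card_ge_filter (N E d : ℕ) (t : Finset (Fin (N+1))) :
    ((((Finset.Nat.antidiagonalTuple (N+1) E).filter fun g => ∀ j ∈ t, d ≤ g j).card : ℤ))
      = intChoose ((E : ℤ) + N - t.card * d) N := by
  classical
  obtain ⟨k, hk⟩ : ∃ k, t.card * d = k := ⟨_, rfl⟩
  have hcast : ((E : ℤ) + N - t.card * d) = ((E : ℤ) + N - k) := by
    rw [← hk]; push_cast; ring
  rw [hcast]
  have hchi : ∑ j : Fin (N+1), (if j ∈ t then d else 0) = k := by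
    rw [Finset.sum_ite_mem, Finset.univ_inter, Finset.sum_const, smul_eq_mul, hk]
  by_cases hle : k ≤ E
  · have hnn : ¬ ((E : ℤ) + N - k < 0) := by omega
    have htn : ((E : ℤ) + N - k).toNat = E - k + N := by omega
    have hcard : ((Finset.Nat.antidiagonalTuple (N+1) E).filter
        fun g => ∀ j ∈ t, d ≤ g j).card
        = (Finset.Nat.antidiagonalTuple (N+1) (E - k)).card := by
      refine Finset.card_bij' (fun g _ => fun j => g j - if j ∈ t then d else 0)
        (fun g _ => fun j => g j + if j ∈ t then d else 0) ?_ ?_ ?_ ?_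
      · intro g hg
        obtain ⟨hg1, hg2⟩ := Finset.mem_filter.1 hg
        rw [Finset.Nat.mem_antidiagonalTuple] at hg1
        simp only [Finset.Nat.mem_antidiagonalTuple]
        have hpt : ∀ j, (if j ∈ t then d else 0) ≤ g j := by
          intro j; split
          · exact hg2 j ‹_›
          · exact Nat.zero_le _
        have hsum : ∑ j : Fin (N+1), ((g j - if j ∈ t then d else 0)
              + (if j ∈ t then d else 0)) = ∑ j : Fin (N+1), g j :=
          Finset.sum_congr rfl fun j _ => Nat.sub_add_cancel (hpt j)
        rw [Finset.sum_add_distrib, hchi, hg1] at hsum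
        exact Nat.eq_sub_of_add_eq hsum
      · intro g hg
        rw [Finset.Nat.mem_antidiagonalTuple] at hg
        refine Finset.mem_filter.2 ⟨?_, ?_⟩
        · simp only [Finset.Nat.mem_antidiagonalTuple]
          rw [Finset.sum_add_distrib, hchi, hg]
          exact Nat.sub_add_cancel hle
        · intro j hj; simp [hj]
      · intro g hg
        obtain ⟨-, hg2⟩ := Finset.mem_filter.1 hg
        funext j
        simp only
        refine Nat.sub_add_cancel ?_
        split
        · exact hg2 j ‹_›
        · exact Nat.zero_le _
      · intro g hg
        funext j
        simp only
        exact Nat.add_sub_cancel _ _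
    rw [hcard, card_antidiagonalTuple_succ, intChoose, if_neg hnn, htn]
  · have hmpty : ((Finset.Nat.antidiagonalTuple (N+1) E).filter
        fun g => ∀ j ∈ t, d ≤ g j) = ∅ := by
      refine Finset.filter_eq_empty_iff.2 fun {g} hg hall => ?_
      rw [Finset.Nat.mem_antidiagonalTuple] at hg
      have h1 : ∑ j ∈ t, d ≤ ∑ j ∈ t, g j := Finset.sum_le_sum fun j hj => hall j hj
      have h2 : ∑ j ∈ t, g j ≤ ∑ j, g j :=
        Finset.sum_le_sum_of_subset (Finset.subset_univ t)
      rw [Finset.sum_const, smul_eq_mul, hk] at h1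
      omega
    rw [hmpty]
    unfold intChoose
    split_ifs with h
    · simp
    · rw [eq_comm, Finset.card_empty, Nat.cast_zero, Nat.cast_eq_zero,
        Nat.choose_eq_zero_iff]
      omega

set_option maxHeartbeats 2000000 in
lemma card_exists_ge (N E d : ℕ) :
    ((((Finset.Nat.antidiagonalTuple (N+1) E).filter fun g => ∃ j, d ≤ g j).card : ℤ))
      = ∑ i ∈ Finset.Icc 1 (N+1), (-1:ℤ)^(i+1) * ((N+1).choose i : ℤ)
          * intChoose ((E:ℤ) + N - i * d) N := by
  classical
  set A := Finset.Nat.antidiagonalTuple (N+1) E with hA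
  set Sf : Fin (N+1) → Finset (Fin (N+1) → ℕ) := fun j => A.filter fun g => d ≤ g j
    with hSf
  have hun : (Finset.univ.biUnion Sf) = A.filter fun g => ∃ j, d ≤ g j := by
    ext g
    simp only [Finset.mem_biUnion, Finset.mem_univ, true_and, Finset.mem_filter, hSf]
    tauto
  have hinf : ∀ (t : Finset (Fin (N+1))) (ht : t.Nonempty),
      t.inf' ht Sf = A.filter fun g => ∀ j ∈ t, d ≤ g j := by
    intro t ht
    induction ht using Finset.Nonempty.cons_induction with
    | singleton a => ext g; simp [hSf]
    | cons a s ha hs ih =>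
      rw [Finset.inf'_cons hs, ih]
      ext g
      simp only [Finset.inf_eq_inter, Finset.mem_inter, Finset.mem_filter, hSf,
        Finset.mem_cons]
      constructor
      · rintro ⟨⟨hg, hd⟩, hg2, hall⟩
        exact ⟨hg, fun j hj => by rcases hj with rfl | hj; exacts [hd, hall j hj]⟩
      · rintro ⟨hg, hall⟩
        exact ⟨⟨hg, hall a (Or.inl rfl)⟩, hg, fun j hj => hall j (Or.inr hj)⟩
  rw [← hun, Finset.inclusion_exclusion_card_biUnion]
  have hterm : ∀ t : {x // x ∈ Finset.filter (fun x => x.Nonempty)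
      (Finset.univ : Finset (Fin (N+1))).powerset},
      (-1:ℤ) ^ ((t : Finset (Fin (N+1))).card + 1)
          * (((t : Finset (Fin (N+1))).inf'
            (Finset.mem_filter.1 t.2).2 Sf).card : ℤ)
        = (-1:ℤ) ^ ((t : Finset (Fin (N+1))).card + 1)
          * intChoose ((E:ℤ) + N - (t : Finset (Fin (N+1))).card * d) N := by
    intro t
    rw [hinf _ (Finset.mem_filter.1 t.2).2, card_ge_filter]
  rw [Finset.sum_congr rfl fun t _ => hterm t, Finset.sum_coe_sort _
    (fun t : Finset (Fin (N+1)) => (-1:ℤ)^(t.card+1) * intChoose ((E:ℤ) + N - t.card * d) N)]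
  rw [Finset.sum_filter, Finset.sum_powerset]
  have hcardu : (Finset.univ : Finset (Fin (N+1))).card = N + 1 := by
    simp
  rw [hcardu]
  have hinner : ∀ j ∈ Finset.range (N + 2),
      (∑ t ∈ Finset.powersetCard j (Finset.univ : Finset (Fin (N+1))),
        if t.Nonempty then (-1:ℤ)^(t.card+1) * intChoose ((E:ℤ) + N - t.card * d) N else 0)
      = (if j = 0 then 0 else
          ((N+1).choose j : ℤ) * ((-1:ℤ)^(j+1) * intChoose ((E:ℤ) + N - j * d) N)) := by
    intro j hj
    have : ∀ t ∈ Finset.powersetCard j (Finset.univ : Finset (Fin (N+1))),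
        (if t.Nonempty then (-1:ℤ)^(t.card+1) * intChoose ((E:ℤ) + N - t.card * d) N else 0)
        = (if j = 0 then 0 else (-1:ℤ)^(j+1) * intChoose ((E:ℤ) + N - j * d) N) := by
      intro t ht
      have htc : t.card = j := (Finset.mem_powersetCard.1 ht).2
      have : t.Nonempty ↔ j ≠ 0 := by
        rw [← htc, Finset.nonempty_iff_ne_empty, not_iff_not, Finset.card_eq_zero]
      rcases eq_or_ne j 0 with rfl | hj0
      · rw [if_neg (by rw [this]; simp), if_pos rfl]
      · rw [if_pos (this.2 hj0), if_neg hj0, htc]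
    rw [Finset.sum_congr rfl this, Finset.sum_const, Finset.card_powersetCard,
      Finset.card_univ, Fintype.card_fin, nsmul_eq_mul]
    rcases eq_or_ne j 0 with rfl | hj0
    · simp
    · rw [if_neg hj0, if_neg hj0]
  rw [Finset.sum_congr rfl hinner,
    show Finset.range (N + 2) = insert 0 (Finset.Icc 1 (N+1)) by
      ext j; simp; omega,
    Finset.sum_insert (by simp)]
  rw [if_pos rfl, zero_add]
  refine Finset.sum_congr rfl fun j hj => ?_
  rw [if_neg (by simp at hj; omega)]
  ring

/-! ### ncard of a product -/

lemma ncard_prod_eq {α β : Type*} (s : Set α) (t : Set β) :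
    (s ×ˢ t).ncard = s.ncard * t.ncard := by
  rw [← Nat.card_coe_set_eq, ← Nat.card_coe_set_eq, ← Nat.card_coe_set_eq,
    ← Nat.card_prod]
  exact Nat.card_congr (Equiv.Set.prod s t)

/-! ### Counting states with a fixed pattern -/

lemma ncard_pattern {T : ℕ} (C x d : ℕ) (dem : Fin T → ℕ)
    (hx : x ≤ C) (n : Fin T → ℕ) (hxn : ∑ t, n t * dem t = x) :
    {s : List (Token T) |
        (s.map (tokenWeight dem)).sum = C ∧
        (s.map (tokenOcc dem)).sum = x ∧
        List.replicate d (none : Token T) <:+: s ∧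
        ∀ t, s.count (some t) = n t}.ncard
      = Nat.multinomial Finset.univ n *
        ((Finset.Nat.antidiagonalTuple ((∑ t, n t) + 1) (C - x)).filter
          fun g => ∃ j, d ≤ g j).card := by
  classical
  set N := ∑ t, n t with hN
  set E := C - x with hE
  set Gfin := (Finset.Nat.antidiagonalTuple (N + 1) E).filter
      (fun g => ∃ j, d ≤ g j) with hGfin
  set Lset := {l : List (Fin T) | ∀ t, l.count t = n t} with hLset
  set F : List (Fin T) × (Fin (N + 1) → ℕ) → List (Token T) := fun q =>
    build (q.2 0) (q.1.zip (List.ofFn fun j : Fin N => q.2 j.succ)) with hF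
  have hlenL : ∀ l ∈ Lset, l.length = N := by
    intro l hl
    rw [length_eq_sum_counts l, hN]
    exact Finset.sum_congr rfl fun t _ => hl t
  have hmemG : ∀ g : Fin (N+1) → ℕ, g ∈ Gfin ↔ (∑ j, g j = E ∧ ∃ j, d ≤ g j) := by
    intro g
    rw [hGfin, Finset.mem_filter, Finset.Nat.mem_antidiagonalTuple]
  -- key computation facts about F on pairs with correct length
  have hkey : ∀ (l : List (Fin T)) (g : Fin (N+1) → ℕ), l.length = N →
      (∀ t, (F (l,g)).count (some t) = l.count t)
      ∧ (F (l,g)).count none = ∑ j, g j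
      ∧ (List.replicate d (none : Token T) <:+: F (l,g) ↔ ∃ j, d ≤ g j) := by
    intro l g hl
    have hlen2 : l.length ≤ (List.ofFn fun j : Fin N => g j.succ).length := by
      simp [hl]
    have hfst : (l.zip (List.ofFn fun j : Fin N => g j.succ)).map Prod.fst = l :=
      List.map_fst_zip hlen2
    have hsnd : (l.zip (List.ofFn fun j : Fin N => g j.succ)).map Prod.snd
        = List.ofFn fun j : Fin N => g j.succ := List.map_snd_zip (by simp [hl])
    refine ⟨?_, ?_, ?_⟩
    · intro t
      show (build (g 0) _).count (some t) = _
      rw [count_build_some, hfst]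
    · show (build (g 0) _).count none = _
      rw [count_build_none, hsnd, List.sum_ofFn, Fin.sum_univ_succ g]
    · show List.replicate d (none : Token T) <:+: build (g 0) _ ↔ _
      rw [run_build]
      constructor
      · rintro (h0 | ⟨q, hq, hdq⟩)
        · exact ⟨0, h0⟩
        · have hq2 : q.2 ∈ (l.zip (List.ofFn fun j : Fin N => g j.succ)).map Prod.snd :=
            List.mem_map_of_mem (f := Prod.snd) hq
          rw [hsnd] at hq2
          obtain ⟨j, hj⟩ := List.mem_ofFn.1 hq2
          exact ⟨j.succ, le_of_le_of_eq hdq hj.symm⟩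
      · rintro ⟨j, hj⟩
        induction j using Fin.cases with
        | zero => exact Or.inl hj
        | succ j' =>
          have hltz : (j' : ℕ) < (l.zip (List.ofFn fun j : Fin N => g j.succ)).length := by
            rw [List.length_zip]
            simp [hl, j'.isLt]
          refine Or.inr ⟨(l.zip (List.ofFn fun j : Fin N => g j.succ))[(j' : ℕ)],
            List.getElem_mem _, ?_⟩
          rw [List.getElem_zip]
          simpa using hj
  have himage : {s : List (Token T) |
        (s.map (tokenWeight dem)).sum = C ∧
        (s.map (tokenOcc dem)).sum = x ∧
        List.replicate d (none : Token T) <:+: s ∧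
        ∀ t, s.count (some t) = n t} = F '' (Lset ×ˢ (Gfin : Set (Fin (N+1) → ℕ))) := by
    ext s
    simp only [Set.mem_setOf_eq, Set.mem_image, Set.mem_prod, Finset.mem_coe]
    constructor
    · rintro ⟨hw, ho, hr, hc⟩
      obtain ⟨g0, p, rfl⟩ := build_surj s
      set l := p.map Prod.fst with hl
      set v := p.map Prod.snd with hv
      have hcount : ∀ t, l.count t = n t := by
        intro t
        rw [hl, ← count_build_some g0 p t]
        exact hc t
      have hlL : l ∈ Lset := hcount
      have hlen : l.length = N := hlenL l hlL
      have hplen : p.length = N := by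
        rw [← hlen, hl, List.length_map]
      have hvlen : v.length = N := by
        rw [hv, List.length_map, hplen]
      set g : Fin (N+1) → ℕ := Fin.cons g0 (fun j' : Fin N => v.getD (j' : ℕ) 0) with hg
      have hofn : (List.ofFn fun j' : Fin N => v.getD (j' : ℕ) 0) = v := by
        apply List.ext_getElem (by simp [hvlen])
        intro i h1 h2
        rw [List.getElem_ofFn]
        exact List.getD_eq_getElem v 0 h2
      have hcnone : (build g0 p).count none = E := by
        have hwe := weight_eq_count_none_add_occ (dem := dem) (build g0 p)
        rw [hw, ho] at hwe
        omega
      have hFeq : F (l, g) = build g0 p := by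
        show build (g 0) (l.zip (List.ofFn fun j : Fin N => g j.succ)) = build g0 p
        have h1 : (List.ofFn fun j : Fin N => g j.succ) = v := by
          rw [hg]
          simpa only [Fin.cons_succ] using hofn
        rw [hg, Fin.cons_zero, h1]
        rw [show l = p.unzip.1 by rw [List.unzip_eq_map], show v = p.unzip.2 by rw [List.unzip_eq_map],
          List.zip_unzip]
      have hgsum : ∑ j, g j = E := by
        have h2 : ∑ j : Fin N, g j.succ = v.sum := by
          have h3 := congrArg List.sum hofn
          rw [List.sum_ofFn] at h3
          rw [← h3]
          exact Finset.sum_congr rfl fun j _ => by rw [hg, Fin.cons_succ]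
        rw [Fin.sum_univ_succ, h2, hg, Fin.cons_zero, hv, ← count_build_none g0 p]
        exact hcnone
      have hgG : g ∈ Gfin := by
        rw [hmemG]
        refine ⟨hgsum, ?_⟩
        have := (hkey l g hlen).2.2
        rw [hFeq] at this
        exact this.1 hr
      exact ⟨(l, g), ⟨hlL, hgG⟩, hFeq⟩
    · rintro ⟨⟨l, g⟩, ⟨hlL, hgG⟩, rfl⟩
      have hlen : l.length = N := hlenL l hlL
      obtain ⟨hgsum, hgex⟩ := (hmemG g).1 hgG
      obtain ⟨hcnt, hcnone, hrun⟩ := hkey l g hlen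
      have hocc : ((F (l, g)).map (tokenOcc dem)).sum = x := by
        rw [occ_eq_sum_counts]
        rw [Finset.sum_congr rfl fun t _ => by rw [hcnt t, hlL t]]
        exact hxn
      refine ⟨?_, hocc, hrun.2 hgex, fun t => by rw [hcnt t, hlL t]⟩
      rw [weight_eq_count_none_add_occ, hocc, hcnone, hgsum]
      omega
  have hinj : Set.InjOn F (Lset ×ˢ (Gfin : Set (Fin (N+1) → ℕ))) := by
    rintro ⟨l, g⟩ ⟨hlL, -⟩ ⟨l', g'⟩ ⟨hl'L, -⟩ heq
    have hlen : l.length = N := hlenL l hlL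
    have hlen' : l'.length = N := hlenL l' hl'L
    obtain ⟨h0, hzip⟩ := build_inj _ heq
    have hfst := congrArg (List.map Prod.fst) hzip
    rw [List.map_fst_zip (by simp [hlen]), List.map_fst_zip (by simp [hlen'])] at hfst
    have hsnd := congrArg (List.map Prod.snd) hzip
    rw [List.map_snd_zip (by simp [hlen]), List.map_snd_zip (by simp [hlen'])] at hsnd
    have hsucc := List.ofFn_inj.1 hsnd
    have hgg : g = g' := by
      funext j
      induction j using Fin.cases with
      | zero => exact h0
      | succ j' => exact congrFun hsucc j'
    rw [Prod.mk.injEq]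
    exact ⟨hfst, hgg⟩
  rw [himage, Set.ncard_image_of_injOn hinj, ncard_prod_eq,
    ncard_lists_eq_multinomial N n hN.symm, Set.ncard_coe_finset]

/-- Theorem 2 of the paper: for `0 ≤ x ≤ C` and a demand `d ≥ 1`, the
number of non-blocking exact link states with occupancy `x` (those containing a run of
at least `d` consecutive free tokens) equals `∑_n (N(n)! / ∏_t (n t)!) * W(n)`, the sum
over all patterns `n` with `∑ t, n t * dem t = x`, where `N(n) = ∑ t, n t`, `E = C - x`
and `W(n) = ∑_{i=1}^{N(n)+1} (-1)^{i+1} * C(N(n)+1, i) * C(E + N(n) - i·d, N(n))`.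
(Since every demand is at least 1, every such pattern satisfies `n t ≤ C`, so the sum
over all patterns in `ℕ^T` is realized as a sum over `n` with `n t < C + 1`.) -/
theorem nonblocking_states_with_occupancy_count
    (C T x : ℕ) (dem : Fin T → ℕ) (hdem : ∀ t, 1 ≤ dem t) (hx : x ≤ C)
    (d : ℕ) (hd : 1 ≤ d) :
    ({s : List (Token T) |
        (s.map (tokenWeight dem)).sum = C ∧
        (s.map (tokenOcc dem)).sum = x ∧
        List.replicate d (none : Token T) <:+: s}.ncard : ℤ)
      = ∑ n ∈ (Fintype.piFinset fun _ : Fin T => Finset.range (C + 1)).filter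
            (fun n => ∑ t, n t * dem t = x),
          (Nat.multinomial Finset.univ n : ℤ) *
            ∑ i ∈ Finset.Icc 1 ((∑ t, n t) + 1),
              (-1 : ℤ) ^ (i + 1) * (((∑ t, n t) + 1).choose i : ℤ) *
                intChoose (((C - x : ℕ) : ℤ) + (∑ t, n t : ℕ)
                    - (i : ℤ) * (d : ℤ)) (∑ t, n t) := by

  classical
  set P := (Fintype.piFinset fun _ : Fin T => Finset.range (C + 1)).filter
      (fun n => ∑ t, n t * dem t = x) with hP
  set S : (Fin T → ℕ) → Set (List (Token T)) := fun n =>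
    {s : List (Token T) |
        (s.map (tokenWeight dem)).sum = C ∧
        (s.map (tokenOcc dem)).sum = x ∧
        List.replicate d (none : Token T) <:+: s ∧
        ∀ t, s.count (some t) = n t} with hS
  have hfinS : ∀ n, (S n).Finite := by
    intro n
    apply (List.finite_length_le (Token T) C).subset
    rintro s ⟨hw, -, -, -⟩
    simp only [Set.mem_setOf_eq]
    calc s.length ≤ (s.map (tokenWeight dem)).sum := length_le_weight hdem s
    _ = C := hw
  have hbig : {s : List (Token T) |
        (s.map (tokenWeight dem)).sum = C ∧
        (s.map (tokenOcc dem)).sum = x ∧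
        List.replicate d (none : Token T) <:+: s} = ⋃ n ∈ P, S n := by
    ext s
    simp only [Set.mem_setOf_eq, Set.mem_iUnion]
    constructor
    · rintro ⟨hw, ho, hr⟩
      refine ⟨fun t => s.count (some t), ?_, hw, ho, hr, fun t => rfl⟩
      have hsum : ∑ t, s.count (some t) * dem t = x := by
        rw [← occ_eq_sum_counts]; exact ho
      rw [hP, Finset.mem_filter]
      refine ⟨?_, hsum⟩
      rw [Fintype.mem_piFinset]
      intro t
      rw [Finset.mem_range]
      have h1 : s.count (some t) ≤ s.count (some t) * dem t :=
        Nat.le_mul_of_pos_right _ (hdem t)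
      have h2 : s.count (some t) * dem t ≤ ∑ t', s.count (some t') * dem t' :=
        Finset.single_le_sum (f := fun t' => s.count (some t') * dem t')
          (fun _ _ => Nat.zero_le _) (Finset.mem_univ t)
      omega
    · rintro ⟨n, hn, hw, ho, hr, -⟩
      exact ⟨hw, ho, hr⟩
  have hdisj : ∀ i ∈ P, ∀ j ∈ P, i ≠ j → Disjoint (S i) (S j) := by
    intro i _ j _ hij
    rw [Set.disjoint_left]
    rintro s ⟨-, -, -, hci⟩ ⟨-, -, -, hcj⟩
    exact hij (funext fun t => (hci t).symm.trans (hcj t))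
  rw [hbig, ncard_biUnion_finset P S (fun n _ => hfinS n) hdisj]
  push_cast
  refine Finset.sum_congr rfl fun n hn => ?_
  have hxn : ∑ t, n t * dem t = x := (Finset.mem_filter.1 hn).2
  have hpat := ncard_pattern C x d dem hx n hxn
  rw [show S n = {s : List (Token T) |
        (s.map (tokenWeight dem)).sum = C ∧
        (s.map (tokenOcc dem)).sum = x ∧
        List.replicate d (none : Token T) <:+: s ∧
        ∀ t, s.count (some t) = n t} from rfl, hpat]
  push_cast
  rw [card_exists_ge (∑ t, n t) (C - x) d]
  push_cast
  ring
end

section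
/- Let C, n, d ∈ ℕ with 1 ≤ d ≤ C. The number of n-element subsets S of {1, …, C} that contain d consecutive integers (i.e., there exists j with {j, j+1, …, j+d−1} ⊆ S) equals Σ_{i=1}^{C−n+1} (−1)^{i+1} · C(C−n+1, i) · C(C − i·d, C − n), where C − i·d is interpreted as an integer and a binomial coefficient whose upper argument is negative or less than its lower argument is taken to be 0. (Dividing by C(C, n), this is the paper's uniform-approximation acceptance probability p_k^{Uni}: the probability that a uniformly random n-element set of free slice positions on a C-slice link contains d contiguous free slices.) -/
lemma intChoose_of_nonneg {p : ℤ} (q : ℕ) (h : 0 ≤ p) :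
    intChoose p q = (p.toNat.choose q : ℤ) := if_neg (by omega)

lemma intChoose_of_neg {p : ℤ} (q : ℕ) (h : p < 0) : intChoose p q = 0 := if_pos h
namespace SliceAux
open Finset
def zf (b : ℕ → ℕ) (j : ℕ) : ℕ := j + ∑ i ∈ Finset.range j, b i
lemma zf_zero (b : ℕ → ℕ) : zf b 0 = 0 := by simp [zf]
lemma zf_succ (b : ℕ → ℕ) (j : ℕ) : zf b (j+1) = zf b j + (b j + 1) := by
  simp [zf, Finset.sum_range_succ]; ring
lemma zf_mono (b : ℕ → ℕ) : StrictMono (zf b) :=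
  strictMono_nat_of_lt_succ (fun j => by rw [zf_succ]; omega)
lemma self_le_zf (b : ℕ → ℕ) (j : ℕ) : j ≤ zf b j := Nat.le_add_right _ _
def ext (k : ℕ) (a : Fin (k+1) → ℕ) : ℕ → ℕ := fun i => if h : i < k+1 then a ⟨i, h⟩ else 0
lemma ext_val (k : ℕ) (a : Fin (k+1) → ℕ) (i : ℕ) (h : i < k+1) : ext k a i = a ⟨i, h⟩ := dif_pos h
lemma sum_ext (k : ℕ) (a : Fin (k+1) → ℕ) :
    ∑ i ∈ Finset.range (k+1), ext k a i = ∑ i, a i := by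
  rw [← Fin.sum_univ_eq_sum_range]
  exact Finset.sum_congr rfl (fun i _ => by rw [ext_val k a i i.isLt])
def zfa (k : ℕ) (a : Fin (k+1) → ℕ) (j : ℕ) : ℕ := zf (ext k a) j
lemma zfa_last (k t : ℕ) (a : Fin (k+1) → ℕ) (ha : ∑ i, a i = t) :
    zfa k a (k+1) = t + k + 1 := by
  unfold zfa zf; rw [sum_ext, ha]; ring
def Zset (k : ℕ) (a : Fin (k+1) → ℕ) : Finset ℕ :=
  (Finset.range k).image (fun j => zfa k a (j+1))
lemma mem_Zset (k : ℕ) (a : Fin (k+1) → ℕ) (x : ℕ) :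
    x ∈ Zset k a ↔ ∃ j < k, zfa k a (j+1) = x := by simp [Zset]
lemma Zset_subset (k t : ℕ) (a : Fin (k+1) → ℕ) (ha : ∑ i, a i = t) :
    Zset k a ⊆ Finset.Icc 1 (t+k) := by
  intro x hx
  rw [mem_Zset] at hx
  obtain ⟨j, hj, rfl⟩ := hx
  have h1 : j + 1 ≤ zfa k a (j+1) := self_le_zf _ _
  have h2 : zfa k a (j+1) < zfa k a (k+1) := zf_mono _ (by omega)
  rw [zfa_last k t a ha] at h2
  rw [Finset.mem_Icc]; omega
lemma Zset_card (k : ℕ) (a : Fin (k+1) → ℕ) : (Zset k a).card = k := by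
  rw [Zset, Finset.card_image_of_injOn, Finset.card_range]
  intro x _ y _ h
  exact Nat.succ_injective ((zf_mono (ext k a)).injective h)
def Fset (k t : ℕ) (a : Fin (k+1) → ℕ) : Finset ℕ := Finset.Icc 1 (t+k) \ Zset k a
lemma Fset_subset (k t : ℕ) (a : Fin (k+1) → ℕ) : Fset k t a ⊆ Finset.Icc 1 (t+k) :=
  Finset.sdiff_subset
lemma Fset_card (k t : ℕ) (a : Fin (k+1) → ℕ) (ha : ∑ i, a i = t) :
    (Fset k t a).card = t := by
  rw [Fset, Finset.card_sdiff_of_subset (Zset_subset k t a ha), Zset_card, Nat.card_Icc]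
  omega

-- NEW PART

lemma Zset_eq_of_Fset_eq (k t : ℕ) (a a' : Fin (k+1) → ℕ) (ha : ∑ i, a i = t)
    (ha' : ∑ i, a' i = t) (h : Fset k t a = Fset k t a') : Zset k a = Zset k a' := by
  have e1 := Finset.sdiff_sdiff_eq_self (Zset_subset k t a ha)
  have e2 := Finset.sdiff_sdiff_eq_self (Zset_subset k t a' ha')
  rw [← e1, ← e2]
  unfold Fset at h
  rw [h]

lemma zfa_eq_of_Zset_eq (k : ℕ) (a a' : Fin (k+1) → ℕ)
    (h : Zset k a = Zset k a') (j : ℕ) (hj : j < k) : zfa k a (j+1) = zfa k a' (j+1) := by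
  have hm : StrictMono (fun j : Fin k => zfa k a (j+1)) := by
    intro x y hxy
    exact zf_mono (ext k a) (by omega : (x:ℕ)+1 < (y:ℕ)+1)
  have hm' : StrictMono (fun j : Fin k => zfa k a' (j+1)) := by
    intro x y hxy
    exact zf_mono (ext k a') (by omega : (x:ℕ)+1 < (y:ℕ)+1)
  have hmem : ∀ x : Fin k, zfa k a (x+1) ∈ Zset k a := by
    intro x; rw [mem_Zset]; exact ⟨x, x.isLt, rfl⟩
  have hmem' : ∀ x : Fin k, zfa k a' (x+1) ∈ Zset k a := by
    intro x; rw [h, mem_Zset]; exact ⟨x, x.isLt, rfl⟩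
  have u1 := Finset.orderEmbOfFin_unique (Zset_card k a) hmem hm
  have u2 := Finset.orderEmbOfFin_unique (Zset_card k a) hmem' hm'
  have : (fun j : Fin k => zfa k a (j+1)) = (fun j : Fin k => zfa k a' (j+1)) := by
    rw [u1, u2]
  exact congrFun this ⟨j, hj⟩

lemma inj (k t : ℕ) (a a' : Fin (k+1) → ℕ) (ha : ∑ i, a i = t)
    (ha' : ∑ i, a' i = t) (h : Fset k t a = Fset k t a') : a = a' := by
  have hZ := Zset_eq_of_Fset_eq k t a a' ha ha' h
  have hz : ∀ j ≤ k+1, zfa k a j = zfa k a' j := by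
    intro j hj
    match j, hj with
    | 0, _ => simp [zfa, zf_zero]
    | j+1, hj =>
      rcases Nat.lt_or_ge j k with hjk | hjk
      · exact zfa_eq_of_Zset_eq k a a' hZ j hjk
      · have hjk2 : j = k := by omega
        rw [hjk2, zfa_last k t a ha, zfa_last k t a' ha']
  funext i
  have h1 : zfa k a (i.val+1) = zfa k a i.val + (ext k a i.val + 1) := zf_succ _ _
  have h2 : zfa k a' (i.val+1) = zfa k a' i.val + (ext k a' i.val + 1) := zf_succ _ _
  have h3 := hz i.val (by omega)
  have h4 := hz (i.val+1) (by omega)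
  rw [ext_val k a i.val i.isLt] at h1
  rw [ext_val k a' i.val i.isLt] at h2
  simp only [Fin.eta] at h1 h2
  omega

lemma surj (k t : ℕ) (S : Finset ℕ) (hS : S ⊆ Finset.Icc 1 (t+k)) (hcard : S.card = t) :
    ∃ a : Fin (k+1) → ℕ, (∑ i, a i = t) ∧ Fset k t a = S := by
  classical
  set Z : Finset ℕ := Finset.Icc 1 (t+k) \ S with hZdef
  have hZsub : Z ⊆ Finset.Icc 1 (t+k) := Finset.sdiff_subset
  have hZcard : Z.card = k := by
    rw [hZdef, Finset.card_sdiff_of_subset hS, hcard, Nat.card_Icc]; omega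
  set e := Z.orderEmbOfFin hZcard with hedef
  have hemem : ∀ i : Fin k, e i ∈ Z := fun i => Z.orderEmbOfFin_mem hZcard i
  have heIcc : ∀ i : Fin k, 1 ≤ e i ∧ e i ≤ t + k := by
    intro i
    have := hZsub (hemem i)
    rw [Finset.mem_Icc] at this; exact this
  set w : ℕ → ℕ := fun j => if h : 1 ≤ j ∧ j ≤ k then e ⟨j-1, by omega⟩
    else (if j = 0 then 0 else t+k+1) with hwdef
  have hw0 : w 0 = 0 := by simp [hwdef]
  have hwlast : w (k+1) = t+k+1 := by simp [hwdef]
  have hwmem : ∀ j, 1 ≤ j → j ≤ k → w j ∈ Z := by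
    intro j h1 h2
    have : w j = e ⟨j-1, by omega⟩ := dif_pos ⟨h1, h2⟩
    rw [this]; exact hemem _
  have hwmono : ∀ j, j ≤ k → w j < w (j+1) := by
    intro j hj
    rcases Nat.eq_zero_or_pos j with rfl | hj1
    · rcases Nat.eq_zero_or_pos k with rfl | hk
      · rw [hw0]; simp [hwdef]
      · rw [hw0]
        have : w 1 = e ⟨0, by omega⟩ := dif_pos ⟨le_refl 1, hk⟩
        rw [this]
        exact lt_of_lt_of_le one_pos (heIcc _).1
    · rcases Nat.lt_or_ge j k with hjk | hjk
      · have e1 : w j = e ⟨j-1, by omega⟩ := dif_pos ⟨hj1, by omega⟩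
        have e2 : w (j+1) = e ⟨j, by omega⟩ := dif_pos ⟨by omega, by omega⟩
        rw [e1, e2]
        exact e.strictMono (by simp [Fin.lt_def]; omega)
      · have hjk2 : j = k := by omega
        have e1 : w j = e ⟨j-1, by omega⟩ := dif_pos ⟨hj1, by omega⟩
        have e2 : w (j+1) = t+k+1 := by
          simp only [hwdef]
          rw [dif_neg (by omega), if_neg (by omega)]
        rw [e1, e2]
        have := (heIcc ⟨j-1, by omega⟩).2
        omega
  set a0 : Fin (k+1) → ℕ := fun i => w (i+1) - w i - 1 with ha0
  have ha0v : ∀ i : Fin (k+1), a0 i = w (i+1) - w i - 1 := fun i => rfl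
  have key : ∀ j, j ≤ k+1 → zfa k a0 j = w j := by
    intro j hj
    induction j with
    | zero => simp [zfa, zf_zero, hw0]
    | succ j ih =>
      have hjk : j ≤ k := by omega
      have hzs : zfa k a0 (j+1) = zfa k a0 j + (ext k a0 j + 1) := zf_succ _ _
      rw [ext_val k _ j (by omega)] at hzs
      rw [ih (by omega)] at hzs
      rw [ha0v] at hzs
      have := hwmono j hjk
      simp only at hzs
      omega
  have hsum : ∑ i, a0 i = t := by
    have h1 := key (k+1) (le_refl _)
    rw [hwlast] at h1
    unfold zfa zf at h1
    rw [sum_ext] at h1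
    omega
  refine ⟨a0, hsum, ?_⟩
  have hZeq : Zset k a0 = Z := by
    apply Finset.ext
    intro x
    rw [mem_Zset]
    constructor
    · rintro ⟨j, hj, rfl⟩
      rw [key (j+1) (by omega)]
      exact hwmem (j+1) (by omega) (by omega)
    · intro hx
      have : x ∈ Set.range e := by rw [hedef, Finset.range_orderEmbOfFin]; exact hx
      obtain ⟨i, hi⟩ := this
      refine ⟨i.val, i.isLt, ?_⟩
      rw [key (i.val+1) (by omega)]
      have hw : w (i.val+1) = e ⟨i.val+1-1, by omega⟩ := dif_pos ⟨by omega, by omega⟩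
      rw [hw, ← hi]
      congr 1
  unfold Fset
  rw [hZeq, hZdef]
  exact Finset.sdiff_sdiff_eq_self hS

lemma run_iff (k t d : ℕ) (hd : 1 ≤ d) (a : Fin (k+1) → ℕ) (ha : ∑ i, a i = t) :
    (∃ i, d ≤ a i) ↔ ∃ j : ℕ, Finset.Icc j (j + d - 1) ⊆ Fset k t a := by
  have hmono := (zf_mono (ext k a)).monotone
  constructor
  · rintro ⟨i, hi⟩
    set z := zfa k a i.val with hz
    refine ⟨z + 1, ?_⟩
    intro x hx
    rw [Finset.mem_Icc] at hx
    have hx1 : z + 1 ≤ x := hx.1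
    have hx2 : x ≤ z + d := by have := hx.2; omega
    have hsucc : zfa k a (i.val+1) = z + (a i + 1) := by
      rw [hz]
      have := zf_succ (ext k a) i.val
      rw [ext_val k a i.val i.isLt, Fin.eta] at this
      exact this
    have hlast : zfa k a (k+1) = t + k + 1 := zfa_last k t a ha
    have hle : zfa k a (i.val+1) ≤ zfa k a (k+1) := hmono (by omega)
    rw [Fset, Finset.mem_sdiff, Finset.mem_Icc]
    refine ⟨⟨by omega, by omega⟩, ?_⟩
    rw [mem_Zset]
    rintro ⟨j, hj, hjx⟩
    rcases Nat.lt_or_ge (j+1) (i.val+1) with hji | hji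
    · have : zfa k a (j+1) ≤ zfa k a i.val := hmono (by omega)
      omega
    · have : zfa k a (i.val+1) ≤ zfa k a (j+1) := hmono (by omega)
      omega
  · rintro ⟨j0, hsub⟩
    by_contra hno
    push_neg at hno
    have hj0 : j0 ∈ Fset k t a := hsub (Finset.mem_Icc.mpr ⟨le_refl _, by omega⟩)
    have hj0' : j0 + d - 1 ∈ Fset k t a := hsub (Finset.mem_Icc.mpr ⟨by omega, le_refl _⟩)
    have hIcc0 := Fset_subset k t a hj0
    have hIcc1 := Fset_subset k t a hj0'
    rw [Finset.mem_Icc] at hIcc0 hIcc1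
    have hlast : zfa k a (k+1) = t + k + 1 := zfa_last k t a ha
    have hPlast : j0 ≤ zfa k a (k+1) := by omega
    set P : ℕ → Prop := fun j => j0 ≤ zfa k a j with hP
    have hex : ∃ j, P j := ⟨k+1, hPlast⟩
    have hspec : j0 ≤ zfa k a (Nat.find hex) := Nat.find_spec hex
    have hjmle : Nat.find hex ≤ k + 1 := Nat.find_min' hex hPlast
    have hjm1 : 1 ≤ Nat.find hex := by
      rcases Nat.eq_zero_or_pos (Nat.find hex) with h0 | h
      · exfalso
        rw [h0] at hspec
        have : zfa k a 0 = 0 := zf_zero _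
        omega
      · exact h
    have hprev : ¬ (j0 ≤ zfa k a (Nat.find hex - 1)) := Nat.find_min hex (by omega)
    obtain ⟨jm, hjmeq⟩ : ∃ m, Nat.find hex = m := ⟨_, rfl⟩
    rw [hjmeq] at hspec hjmle hjm1 hprev
    clear hjmeq hex hP P
    have hsucc : zfa k a ((jm-1)+1) = zfa k a (jm-1) + (ext k a (jm-1) + 1) := zf_succ _ _
    have hjmk : jm - 1 < k + 1 := by omega
    rw [ext_val k a (jm-1) hjmk] at hsucc
    have hbound : a ⟨jm-1, hjmk⟩ < d := hno _
    have hjme : (jm - 1) + 1 = jm := by omega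
    rw [hjme] at hsucc
    have hin : zfa k a jm ∈ Finset.Icc j0 (j0 + d - 1) := by
      rw [Finset.mem_Icc]; omega
    have hmem := hsub hin
    rw [Fset, Finset.mem_sdiff] at hmem
    apply hmem.2
    rw [mem_Zset]
    have hzle : zfa k a jm ≤ j0 + d - 1 := (Finset.mem_Icc.mp hin).2
    have hjmk2 : jm ≤ k := by
      by_contra hc
      have hh : jm = k + 1 := by omega
      rw [hh, hlast] at hzle
      omega
    exact ⟨jm - 1, by omega, by rw [hjme]⟩

lemma card_filter_eq (k t : ℕ) (p : (Fin (k+1) → ℕ) → Prop) [DecidablePred p]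
    (q : Finset ℕ → Prop) [DecidablePred q]
    (hpq : ∀ a : Fin (k+1) → ℕ, (∑ i, a i = t) → (p a ↔ q (Fset k t a))) :
    ((Finset.Nat.antidiagonalTuple (k+1) t).filter p).card
      = ((Finset.Icc 1 (t+k)).powerset.filter (fun S => S.card = t ∧ q S)).card := by
  apply Finset.card_bij (fun a _ => Fset k t a)
  · intro a ha
    rw [Finset.mem_filter, Finset.Nat.mem_antidiagonalTuple] at ha
    rw [Finset.mem_filter, Finset.mem_powerset]
    exact ⟨Fset_subset k t a, Fset_card k t a ha.1, (hpq a ha.1).mp ha.2⟩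
  · intro a₁ ha₁ a₂ ha₂ h
    rw [Finset.mem_filter, Finset.Nat.mem_antidiagonalTuple] at ha₁ ha₂
    exact inj k t a₁ a₂ ha₁.1 ha₂.1 h
  · intro S hS
    rw [Finset.mem_filter, Finset.mem_powerset] at hS
    obtain ⟨hsub, hcard, hq⟩ := hS
    obtain ⟨a, hasum, haF⟩ := surj k t S hsub hcard
    refine ⟨a, ?_, haF⟩
    rw [Finset.mem_filter, Finset.Nat.mem_antidiagonalTuple]
    exact ⟨hasum, (hpq a hasum).mpr (haF ▸ hq)⟩

lemma card_adt (k t : ℕ) :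
    (Finset.Nat.antidiagonalTuple (k+1) t).card = (t+k).choose k := by
  classical
  have h := card_filter_eq k t (fun _ => True) (fun _ => True) (fun a _ => Iff.rfl)
  simp only [Finset.filter_true, and_true] at h
  rw [h, ← Finset.powersetCard_eq_filter, Finset.card_powersetCard, Nat.card_Icc]
  have : t + k + 1 - 1 = t + k := by omega
  rw [this, Nat.choose_symm_add]

lemma card_ge_filter (k t d : ℕ) (T : Finset (Fin (k+1))) :
    ((((Finset.Nat.antidiagonalTuple (k+1) t).filter
        (fun a => ∀ i ∈ T, d ≤ a i)).card : ℤ))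
      = intChoose ((t:ℤ) + k - T.card * d) k := by
  classical
  obtain ⟨c, hc⟩ : ∃ c : Fin (k+1) → ℕ, c = fun i => if i ∈ T then d else 0 := ⟨_, rfl⟩
  have hsumc : ∑ i, c i = T.card * d := by
    rw [hc]
    rw [Finset.sum_ite_mem, Finset.univ_inter, Finset.sum_const, smul_eq_mul]
  rcases le_or_gt (T.card * d) t with hle | hlt
  · have hnn : (0:ℤ) ≤ (t:ℤ) + (k:ℤ) - (T.card:ℤ) * (d:ℤ) := by push_cast; omega
    have htn : ((t:ℤ) + (k:ℤ) - (T.card:ℤ) * (d:ℤ)).toNat = t - T.card * d + k := by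
      push_cast; omega
    have hcard : ((Finset.Nat.antidiagonalTuple (k+1) t).filter
        (fun a => ∀ i ∈ T, d ≤ a i)).card
        = (Finset.Nat.antidiagonalTuple (k+1) (t - T.card * d)).card := by
      apply Finset.card_bij' (fun a _ => fun i => a i - c i) (fun b _ => fun i => b i + c i)
      · intro a ha
        rw [Finset.mem_filter, Finset.Nat.mem_antidiagonalTuple] at ha
        rw [Finset.Nat.mem_antidiagonalTuple]
        have hpt : ∀ i ∈ Finset.univ, c i ≤ a i := by
          intro i _
          rw [hc]
          by_cases h : i ∈ T
          · simp only [if_pos h]; exact ha.2 i h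
          · simp only [if_neg h]; omega
        rw [Finset.sum_tsub_distrib Finset.univ hpt, ha.1, hsumc]
      · intro b hb
        rw [Finset.Nat.mem_antidiagonalTuple] at hb
        rw [Finset.mem_filter, Finset.Nat.mem_antidiagonalTuple]
        constructor
        · rw [Finset.sum_add_distrib, hb, hsumc]; omega
        · intro i hi
          have hcd : c i = d := by rw [hc]; simp [hi]
          show d ≤ b i + c i
          omega
      · intro a ha
        rw [Finset.mem_filter] at ha
        funext i
        have hca : c i ≤ a i := by
          rw [hc]
          by_cases h : i ∈ T
          · simp only [if_pos h]; exact ha.2 i h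
          · simp only [if_neg h]; omega
        show a i - c i + c i = a i
        omega
      · intro b _
        funext i
        show b i + c i - c i = b i
        omega
    rw [hcard, card_adt, intChoose_of_nonneg _ hnn, htn]
  · have hempty : (Finset.Nat.antidiagonalTuple (k+1) t).filter
        (fun a => ∀ i ∈ T, d ≤ a i) = ∅ := by
      rw [Finset.filter_eq_empty_iff]
      intro a ha hall
      rw [Finset.Nat.mem_antidiagonalTuple] at ha
      have h1 : ∑ i ∈ T, c i ≤ ∑ i ∈ T, a i :=
        Finset.sum_le_sum (fun i hi => by rw [hc]; simp only [if_pos hi]; exact hall i hi)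
      have h2 : ∑ i ∈ T, a i ≤ ∑ i ∈ Finset.univ, a i :=
        Finset.sum_le_sum_of_subset (Finset.subset_univ T)
      have h3 : ∑ i ∈ T, c i = T.card * d := by
        rw [hc]
        rw [show (∑ i ∈ T, if i ∈ T then d else 0) = ∑ i ∈ T, d from
          Finset.sum_congr rfl (fun i hi => if_pos hi)]
        rw [Finset.sum_const, smul_eq_mul]
      rw [ha] at h2
      omega
    rw [hempty, Finset.card_empty]
    by_cases hneg : ((t:ℤ) + k - T.card * d) < 0
    · rw [intChoose_of_neg _ hneg]; norm_num
    · push_neg at hneg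
      rw [intChoose_of_nonneg _ hneg]
      have hlt2 : ((t:ℤ) + k - T.card * d).toNat < k := by omega
      norm_num [Nat.choose_eq_zero_of_lt hlt2]

lemma no_run_count (k t d : ℕ) :
    ((((Finset.Nat.antidiagonalTuple (k+1) t).filter
        (fun a => ¬ ∃ i, d ≤ a i)).card : ℤ))
      = ∑ i ∈ Finset.range (k+2),
          (-1:ℤ)^i * ((k+1).choose i : ℤ) * intChoose ((t:ℤ) + k - i * d) k := by
  classical
  obtain ⟨A, hA⟩ : ∃ A, A = Finset.Nat.antidiagonalTuple (k+1) t := ⟨_, rfl⟩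
  rw [← hA]
  have step1 : ((A.filter (fun a => ¬ ∃ i, d ≤ a i)).card : ℤ)
      = ∑ a ∈ A, if (Finset.univ.filter (fun i => d ≤ a i)) = ∅ then (1:ℤ) else 0 := by
    rw [Finset.card_filter]
    push_cast
    apply Finset.sum_congr rfl
    intro a _
    congr 1
    · simp only [eq_iff_iff]
      rw [Finset.filter_eq_empty_iff]
      simp
  have step2 : ∀ a : Fin (k+1) → ℕ,
      (if (Finset.univ.filter (fun i => d ≤ a i)) = ∅ then (1:ℤ) else 0)
      = ∑ T ∈ Finset.univ.powerset,
          if T ⊆ Finset.univ.filter (fun i => d ≤ a i) then (-1:ℤ)^T.card else 0 := by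
    intro a
    rw [← Finset.sum_powerset_neg_one_pow_card (x := Finset.univ.filter (fun i => d ≤ a i))]
    rw [← Finset.sum_filter]
    apply Finset.sum_congr _ (fun _ _ => rfl)
    apply Finset.ext
    intro T
    simp only [Finset.mem_filter, Finset.mem_powerset]
    constructor
    · intro h
      exact ⟨h.trans (Finset.filter_subset _ _), h⟩
    · intro h
      exact h.2
  have hsub : ∀ (a : Fin (k+1) → ℕ) (T : Finset (Fin (k+1))),
      (T ⊆ Finset.univ.filter (fun i => d ≤ a i)) ↔ (∀ i ∈ T, d ≤ a i) := by
    intro a T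
    constructor
    · intro h i hi
      exact (Finset.mem_filter.mp (h hi)).2
    · intro h i hi
      exact Finset.mem_filter.mpr ⟨Finset.mem_univ i, h i hi⟩
  have step3 : ((A.filter (fun a => ¬ ∃ i, d ≤ a i)).card : ℤ)
      = ∑ T ∈ (Finset.univ : Finset (Fin (k+1))).powerset,
          (-1:ℤ)^T.card * ((A.filter (fun a => ∀ i ∈ T, d ≤ a i)).card : ℤ) := by
    rw [step1]
    rw [Finset.sum_congr rfl (fun a _ => step2 a)]
    rw [Finset.sum_comm]
    apply Finset.sum_congr rfl
    intro T _
    rw [Finset.sum_congr rfl (fun a (_ : a ∈ A) => if_congr (hsub a T) rfl rfl)]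
    rw [← Finset.sum_filter, Finset.sum_const, nsmul_eq_mul, mul_comm]
  rw [step3]
  have step4 : ∀ T ∈ (Finset.univ : Finset (Fin (k+1))).powerset,
      (-1:ℤ)^T.card * ((A.filter (fun a => ∀ i ∈ T, d ≤ a i)).card : ℤ)
      = (-1:ℤ)^T.card * intChoose ((t:ℤ) + k - T.card * d) k := by
    intro T _
    rw [hA, card_ge_filter]
  rw [Finset.sum_congr rfl step4]
  rw [Finset.sum_powerset]
  have hcu : (Finset.univ : Finset (Fin (k+1))).card = k + 1 := by
    rw [Finset.card_univ, Fintype.card_fin]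
  rw [hcu]
  apply Finset.sum_congr rfl
  intro j _
  have hinner : ∀ T ∈ Finset.powersetCard j (Finset.univ : Finset (Fin (k+1))),
      (-1:ℤ)^T.card * intChoose ((t:ℤ) + k - T.card * d) k
      = (-1:ℤ)^j * intChoose ((t:ℤ) + k - j * d) k := by
    intro T hT
    rw [(Finset.mem_powersetCard.mp hT).2]
  rw [Finset.sum_congr rfl hinner, Finset.sum_const, Finset.card_powersetCard, hcu,
    nsmul_eq_mul]
  push_cast
  ring

end SliceAux

/-- for `1 ≤ d ≤ C` and `n ≤ C` free slices, the number of `n`-element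
subsets `S` of `{1, …, C}` containing `d` consecutive integers (i.e. `∃ j` with
`{j, j+1, …, j+d-1} ⊆ S`) equals
`∑_{i=1}^{C-n+1} (-1)^{i+1} * C(C-n+1, i) * C(C - i·d, C - n)`. -/
theorem subsets_with_d_consecutive_count
    (C n d : ℕ) (hd : 1 ≤ d) (hdC : d ≤ C) (hn : n ≤ C) :
    ({S : Finset ℕ | S ⊆ Finset.Icc 1 C ∧ S.card = n ∧
        ∃ j, Finset.Icc j (j + d - 1) ⊆ S}.ncard : ℤ)
      = ∑ i ∈ Finset.Icc 1 (C - n + 1),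
          (-1 : ℤ) ^ (i + 1) * ((C - n + 1).choose i : ℤ) *
            intChoose ((C : ℤ) - (i : ℤ) * (d : ℤ)) (C - n) := by
  classical
  obtain ⟨k, hk⟩ : ∃ k, C = n + k := ⟨C - n, by omega⟩
  have hk1 : C - n = k := by omega
  have hkc : (C:ℤ) = (n:ℤ) + (k:ℤ) := by exact_mod_cast hk
  have hrange : Finset.range (k+2) = insert 0 (Finset.Icc 1 (k+1)) := by
    ext x
    simp only [Finset.mem_range, Finset.mem_insert, Finset.mem_Icc]
    omega
  rw [hk1]
  -- the set as a finset
  have hset : {S : Finset ℕ | S ⊆ Finset.Icc 1 C ∧ S.card = n ∧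
      ∃ j, Finset.Icc j (j + d - 1) ⊆ S}
      = ↑((Finset.Icc 1 (n+k)).powerset.filter
          (fun S => S.card = n ∧ ∃ j, Finset.Icc j (j + d - 1) ⊆ S)) := by
    rw [← hk]
    ext S
    simp only [Set.mem_setOf_eq, Finset.coe_filter, Finset.mem_powerset]
  rw [hset, Set.ncard_coe_finset]
  have hbij := SliceAux.card_filter_eq k n (fun a => ∃ i, d ≤ a i)
    (fun S => ∃ j, Finset.Icc j (j + d - 1) ⊆ S)
    (fun a ha => SliceAux.run_iff k n d hd a ha)
  rw [← hbij]
  -- counting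
  obtain ⟨A, hA⟩ : ∃ A, A = Finset.Nat.antidiagonalTuple (k+1) n := ⟨_, rfl⟩
  rw [← hA]
  have hsplit : ((A.filter (fun a => ∃ i, d ≤ a i)).card : ℤ)
      + ((A.filter (fun a => ¬ ∃ i, d ≤ a i)).card : ℤ) = (A.card : ℤ) := by
    exact_mod_cast congrArg (Nat.cast (R := ℤ))
      (Finset.card_filter_add_card_filter_not (s := A) (p := fun a => ∃ i, d ≤ a i))
  have hAcard : (A.card : ℤ) = (C.choose k : ℤ) := by
    rw [hA, SliceAux.card_adt, ← hk]
  have hnrc : ((A.filter (fun a => ¬ ∃ i, d ≤ a i)).card : ℤ)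
      = ∑ i ∈ Finset.range (k+2),
          (-1:ℤ)^i * ((k+1).choose i : ℤ) * intChoose ((C:ℤ) - (i:ℤ) * (d:ℤ)) k := by
    rw [hA, SliceAux.no_run_count k n d]
    apply Finset.sum_congr rfl
    intro i _
    rw [show ((n:ℤ) + (k:ℤ) - (i:ℤ) * (d:ℤ)) = ((C:ℤ) - (i:ℤ) * (d:ℤ)) by linarith [hkc]]
  have hX0 : intChoose ((C:ℤ) - (0:ℤ) * (d:ℤ)) k = (C.choose k : ℤ) := by
    rw [show ((C:ℤ) - (0:ℤ) * (d:ℤ)) = (C:ℤ) by ring,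
      intChoose_of_nonneg _ (by positivity), Int.toNat_natCast]
  have hsum0 : ∑ i ∈ Finset.range (k+2),
        (-1:ℤ)^i * ((k+1).choose i : ℤ) * intChoose ((C:ℤ) - (i:ℤ) * (d:ℤ)) k
      = (C.choose k : ℤ) + ∑ i ∈ Finset.Icc 1 (k+1),
          (-1:ℤ)^i * ((k+1).choose i : ℤ) * intChoose ((C:ℤ) - (i:ℤ) * (d:ℤ)) k := by
    rw [hrange, Finset.sum_insert (by simp)]
    congr 1
    rw [← hX0]
    simp
  have hneg : ∑ i ∈ Finset.Icc 1 (k+1),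
        (-1:ℤ)^(i+1) * ((k+1).choose i : ℤ) * intChoose ((C:ℤ) - (i:ℤ) * (d:ℤ)) k
      = -∑ i ∈ Finset.Icc 1 (k+1),
          (-1:ℤ)^i * ((k+1).choose i : ℤ) * intChoose ((C:ℤ) - (i:ℤ) * (d:ℤ)) k := by
    rw [← Finset.sum_neg_distrib]
    apply Finset.sum_congr rfl
    intro i _
    rw [pow_succ]
    ring
  rw [hneg]
  rw [hnrc, hsum0] at hsplit
  rw [hAcard] at hsplit
  linarith [hsplit]
end
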